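/- Let f : ℝ^n → ℝ be a convex polynomial function whose Hessian determinant h_f(x) = det(∇²f(x)) is not identically zero on ℝ^n. Then there exist α ∈ ℝ, β ∈ ℝ^n, and μ > 0 such that f(x) ≥ α + ⟨β, x⟩ + (μ/2)·‖x‖² for all x ∈ ℝ^n; that is, f admits a μ-strongly convex quadratic lower bound. -/

import Mathlib

open RealInnerProductSpace

/-- The Hessian matrix of a function `f : ℝⁿ → ℝ` at a point `x`,
whose `(i,j)` entry is the second partial derivative `∂²f/∂xᵢ∂xⱼ (x)`. -/
noncomputable def hess {n : ℕ} (f : EuclideanSpace ℝ (Fin n) → ℝ)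
    (x : EuclideanSpace ℝ (Fin n)) : Matrix (Fin n) (Fin n) ℝ :=
  Matrix.of fun i j =>
    fderiv ℝ (fun y => fderiv ℝ f y (EuclideanSpace.single j 1)) x (EuclideanSpace.single i 1)

section Aux

open Polynomial intervalIntegral in
lemma aux_L1 (K : ℕ) : ∃ m : ℝ, 0 < m ∧ ∀ a : Fin (K+1) → ℝ,
    (∀ s ∈ Set.Icc (0:ℝ) 1, 0 ≤ ∑ k : Fin (K+1), a k * s ^ (k:ℕ)) →
    m * a 0 ≤ ∑ k : Fin (K+1), a k / ((k:ℕ) + 1) := by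
  classical
  set S : Set (Fin (K+1) → ℝ) :=
    {a | ‖a‖ = 1 ∧ ∀ s ∈ Set.Icc (0:ℝ) 1, 0 ≤ ∑ k : Fin (K+1), a k * s ^ (k:ℕ)} with hS
  -- every element of S has positive integral
  have hpos : ∀ a ∈ S, 0 < ∑ k : Fin (K+1), a k / ((k:ℕ) + 1) := by
    rintro a ⟨hnorm, hnn⟩
    set Q : ℝ[X] := ∑ k : Fin (K+1), C (a k) * X ^ (k:ℕ) with hQ
    have hQeval : ∀ s : ℝ, Q.eval s = ∑ k : Fin (K+1), a k * s ^ (k:ℕ) := by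
      intro s; simp [hQ, eval_finset_sum]
    have hcoeff : ∀ k : Fin (K+1), Q.coeff (k:ℕ) = a k := by
      intro k
      rw [hQ, finset_sum_coeff]
      simp only [coeff_C_mul, coeff_X_pow]
      rw [Finset.sum_eq_single k]
      · simp
      · intro j _ hj
        rw [if_neg (fun h => hj (Fin.val_injective h.symm))]
        ring
      · simp
    have hane : a ≠ 0 := by
      intro h; rw [h] at hnorm; simp at hnorm
    have hQne : Q ≠ 0 := by
      intro h
      apply hane
      funext k
      have := hcoeff k
      rw [h] at this
      simpa using this.symm
    have hinf : (Set.Ioo (0:ℝ) 1).Infinite := Set.Ioo_infinite (by norm_num : (0:ℝ) < 1)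
    have hroots : ¬ (Set.Ioo (0:ℝ) 1 ⊆ {x | Q.IsRoot x}) := by
      intro hsub
      exact (Polynomial.finite_setOf_isRoot hQne).not_infinite (hinf.mono hsub)
    obtain ⟨s₀, hs₀mem, hs₀⟩ := Set.not_subset.mp hroots
    have h0le : (0:ℝ) ≤ Q.eval s₀ := by
      rw [hQeval]; exact hnn s₀ (Set.mem_Icc_of_Ioo hs₀mem)
    have hq0 : 0 < Q.eval s₀ := lt_of_le_of_ne h0le (fun h => hs₀ h.symm)
    have hqcont : Continuous fun s => Q.eval s := Q.continuous
    have hopen : IsOpen ({s : ℝ | 0 < Q.eval s} ∩ Set.Ioo 0 1) :=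
      (isOpen_lt continuous_const hqcont).inter isOpen_Ioo
    obtain ⟨ε, hε, hball⟩ := Metric.isOpen_iff.mp hopen s₀ ⟨hq0, hs₀mem⟩
    obtain ⟨c, d, hc, hd⟩ : ∃ c d : ℝ, c = s₀ - ε/2 ∧ d = s₀ + ε/2 := ⟨_, _, rfl, rfl⟩
    have hcd : c < d := by rw [hc, hd]; linarith
    have hIcc : Set.Icc c d ⊆ {s : ℝ | 0 < Q.eval s} ∩ Set.Ioo 0 1 := by
      intro s hs
      have h1s : c ≤ s := hs.1
      have h2s : s ≤ d := hs.2
      apply hball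
      rw [Metric.mem_ball, Real.dist_eq, abs_sub_lt_iff]
      constructor <;> linarith
    have hc0 : 0 < c := (hIcc ⟨le_refl c, le_of_lt hcd⟩).2.1
    have hd1 : d < 1 := (hIcc ⟨le_of_lt hcd, le_refl d⟩).2.2
    have hint : ∀ (u v : ℝ), IntervalIntegrable (fun s => Q.eval s) MeasureTheory.volume u v :=
      fun u v => hqcont.intervalIntegrable u v
    have hφint : ∑ k : Fin (K+1), a k / ((k:ℕ) + 1) = ∫ s in (0:ℝ)..1, Q.eval s := by
      have hcongr : ∀ s ∈ Set.uIcc (0:ℝ) 1, Q.eval s = ∑ k : Fin (K+1), a k * s ^ (k:ℕ) :=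
        fun s _ => hQeval s
      rw [intervalIntegral.integral_congr hcongr, intervalIntegral.integral_finset_sum]
      · apply Finset.sum_congr rfl
        intro k _
        rw [intervalIntegral.integral_const_mul, integral_pow]
        simp [div_eq_mul_inv]
      · intro k _
        exact ((continuous_const.mul (continuous_pow _)).intervalIntegrable _ _)
    have hnnQ : ∀ s ∈ Set.Icc (0:ℝ) 1, 0 ≤ Q.eval s := by
      intro s hs; rw [hQeval]; exact hnn s hs
    have hsplit : (∫ s in (0:ℝ)..1, Q.eval s)
        = (∫ s in (0:ℝ)..c, Q.eval s) + (∫ s in c..d, Q.eval s) + (∫ s in d..(1:ℝ), Q.eval s) := by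
      rw [integral_add_adjacent_intervals (hint 0 c) (hint c d),
        integral_add_adjacent_intervals (hint 0 d) (hint d 1)]
    have h1 : 0 ≤ ∫ s in (0:ℝ)..c, Q.eval s :=
      intervalIntegral.integral_nonneg (le_of_lt hc0)
        (fun u hu => hnnQ u ⟨hu.1, le_trans hu.2 (by linarith)⟩)
    have h2 : 0 < ∫ s in c..d, Q.eval s :=
      intervalIntegral.intervalIntegral_pos_of_pos_on (hint c d)
        (fun u hu => (hIcc ⟨le_of_lt hu.1, le_of_lt hu.2⟩).1) hcd
    have h3 : 0 ≤ ∫ s in d..(1:ℝ), Q.eval s :=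
      intervalIntegral.integral_nonneg (le_of_lt hd1)
        (fun u hu => hnnQ u ⟨le_trans (by linarith) hu.1, hu.2⟩)
    rw [hφint, hsplit]
    linarith
  by_cases hne : S.Nonempty
  · have hclosed : IsClosed S := by
      have hSeq : S = {a : Fin (K+1) → ℝ | ‖a‖ = 1} ∩
          ⋂ s ∈ Set.Icc (0:ℝ) 1, {a : Fin (K+1) → ℝ | 0 ≤ ∑ k : Fin (K+1), a k * s ^ (k:ℕ)} := by
        ext a; simp [hS]
      rw [hSeq]
      refine (isClosed_eq continuous_norm continuous_const).inter (isClosed_biInter ?_)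
      intro s _
      exact isClosed_le continuous_const
        (continuous_finset_sum _ (fun k _ => (continuous_apply k).mul continuous_const))
    have hScompact : IsCompact S := by
      apply Metric.isCompact_of_isClosed_isBounded hclosed
      apply Bornology.IsBounded.subset (Metric.isBounded_closedBall (x := (0 : Fin (K+1) → ℝ)) (r := 1))
      rintro a ⟨ha, -⟩
      simp [Metric.mem_closedBall, dist_zero_right, ha]
    have hφcont : Continuous fun a : Fin (K+1) → ℝ => ∑ k : Fin (K+1), a k / ((k:ℕ) + 1) :=
      continuous_finset_sum _ (fun k _ => (continuous_apply k).div_const _)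
    obtain ⟨a₀, ha₀S, hmin⟩ := hScompact.exists_isMinOn hne hφcont.continuousOn
    set m := ∑ k : Fin (K+1), a₀ k / ((k:ℕ) + 1) with hm
    refine ⟨m, hpos a₀ ha₀S, ?_⟩
    intro a hnn
    by_cases ha : a = 0
    · simp [ha]
    · have hr : 0 < ‖a‖ := norm_pos_iff.mpr ha
      set b : Fin (K+1) → ℝ := ‖a‖⁻¹ • a with hb
      have hbS : b ∈ S := by
        constructor
        · rw [hb, norm_smul, norm_inv, norm_norm, inv_mul_cancel₀ (ne_of_gt hr)]
        · intro s hs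
          have heq : ∑ k : Fin (K+1), b k * s ^ (k:ℕ)
              = ‖a‖⁻¹ * ∑ k : Fin (K+1), a k * s ^ (k:ℕ) := by
            rw [Finset.mul_sum]
            apply Finset.sum_congr rfl
            intro k _
            simp [hb]; ring
          rw [heq]
          exact mul_nonneg (inv_nonneg.mpr (le_of_lt hr)) (hnn s hs)
      have hminb : m ≤ ∑ k : Fin (K+1), b k / ((k:ℕ) + 1) := hmin hbS
      have hmb : m * b 0 ≤ ∑ k : Fin (K+1), b k / ((k:ℕ) + 1) := by
        have h2 : b 0 ≤ 1 := by
          calc b 0 ≤ |b 0| := le_abs_self _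
          _ ≤ ‖b‖ := by rw [← Real.norm_eq_abs]; exact norm_le_pi_norm b 0
          _ = 1 := hbS.1
        nlinarith [hpos a₀ ha₀S]
      have hφb : ∑ k : Fin (K+1), b k / ((k:ℕ) + 1)
          = ‖a‖⁻¹ * ∑ k : Fin (K+1), a k / ((k:ℕ) + 1) := by
        rw [Finset.mul_sum]
        apply Finset.sum_congr rfl
        intro k _
        simp [hb]; ring
      have hb0 : b 0 = ‖a‖⁻¹ * a 0 := by simp [hb]
      rw [hφb, hb0] at hmb
      have h4 := mul_le_mul_of_nonneg_left hmb (le_of_lt hr)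
      calc m * a 0 = ‖a‖ * (m * (‖a‖⁻¹ * a 0)) := by
            field_simp
        _ ≤ ‖a‖ * (‖a‖⁻¹ * ∑ k : Fin (K+1), a k / ((k:ℕ) + 1)) := h4
        _ = ∑ k : Fin (K+1), a k / ((k:ℕ) + 1) := by field_simp
  · refine ⟨1, one_pos, ?_⟩
    intro a hnn
    by_cases ha : a = 0
    · simp [ha]
    · exfalso
      apply hne
      have hr : 0 < ‖a‖ := norm_pos_iff.mpr ha
      refine ⟨‖a‖⁻¹ • a, ?_, ?_⟩
      · rw [norm_smul, norm_inv, norm_norm, inv_mul_cancel₀ (ne_of_gt hr)]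
      · intro s hs
        have heq : ∑ k : Fin (K+1), (‖a‖⁻¹ • a) k * s ^ (k:ℕ)
            = ‖a‖⁻¹ * ∑ k : Fin (K+1), a k * s ^ (k:ℕ) := by
          rw [Finset.mul_sum]
          apply Finset.sum_congr rfl
          intro k _
          simp; ring
        rw [heq]
        exact mul_nonneg (inv_nonneg.mpr (le_of_lt hr)) (hnn s hs)


lemma aux_mono_deriv_nonneg {g : ℝ → ℝ} (hg : Monotone g) {d t : ℝ}
    (h : HasDerivAt g d t) : 0 ≤ d := by
  have htend := hasDerivAt_iff_tendsto_slope.mp h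
  have h2 : Filter.Tendsto (slope g t) (nhdsWithin t (Set.Ioi t)) (nhds d) := by
    apply htend.mono_left (nhdsWithin_mono t ?_)
    intro s hs
    simp only [Set.mem_compl_iff, Set.mem_singleton_iff]
    exact ne_of_gt hs
  apply ge_of_tendsto h2
  filter_upwards [self_mem_nhdsWithin] with s hs
  have hst : (0:ℝ) < s - t := sub_pos.mpr hs
  rw [slope_def_field]
  exact div_nonneg (sub_nonneg.mpr (hg (le_of_lt hs))) (le_of_lt hst)

open Polynomial intervalIntegral in
lemma aux_L2 {K : ℕ} {m : ℝ}
    (hK : ∀ a : Fin (K+1) → ℝ,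
      (∀ s ∈ Set.Icc (0:ℝ) 1, 0 ≤ ∑ k : Fin (K+1), a k * s ^ (k:ℕ)) →
      m * a 0 ≤ ∑ k : Fin (K+1), a k / ((k:ℕ) + 1))
    (Q : Polynomial ℝ) (hdeg : Q.natDegree ≤ K) (hQnn : ∀ s : ℝ, 0 ≤ Q.eval s)
    {t : ℝ} (ht : 0 ≤ t) :
    m * Q.eval 0 * t ≤ ∫ s in (0:ℝ)..t, Q.eval s := by
  have hdeg' : Q.natDegree < K + 1 := Nat.lt_succ_of_le hdeg
  set a : Fin (K+1) → ℝ := fun k => Q.coeff (k:ℕ) * t ^ (k:ℕ) with ha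
  have hev : ∀ u : ℝ, Q.eval (t*u) = ∑ k : Fin (K+1), a k * u ^ (k:ℕ) := by
    intro u
    rw [Polynomial.eval_eq_sum_range' hdeg' (t*u), ← Fin.sum_univ_eq_sum_range]
    apply Finset.sum_congr rfl
    intro k _
    rw [ha, mul_pow]
    ring
  have hnn : ∀ s ∈ Set.Icc (0:ℝ) 1, 0 ≤ ∑ k : Fin (K+1), a k * s ^ (k:ℕ) := by
    intro s _
    rw [← hev s]
    exact hQnn _
  have key := hK a hnn
  have ha0 : a 0 = Q.eval 0 := by
    rw [ha]
    simp [Polynomial.coeff_zero_eq_eval_zero]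
  have hintegral : (∫ s in (0:ℝ)..t, Q.eval s)
      = ∑ k : Fin (K+1), Q.coeff (k:ℕ) * (t ^ ((k:ℕ)+1) / ((k:ℕ)+1)) := by
    have hcongr : ∀ s ∈ Set.uIcc (0:ℝ) t,
        Q.eval s = ∑ k : Fin (K+1), Q.coeff (k:ℕ) * s ^ (k:ℕ) := by
      intro s _
      rw [Polynomial.eval_eq_sum_range' hdeg' s, ← Fin.sum_univ_eq_sum_range]
    rw [intervalIntegral.integral_congr hcongr, intervalIntegral.integral_finset_sum]
    · apply Finset.sum_congr rfl
      intro k _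
      rw [intervalIntegral.integral_const_mul, integral_pow]
      norm_num
    · intro k _
      exact ((continuous_const.mul (continuous_pow _)).intervalIntegrable _ _)
  have hsum : ∑ k : Fin (K+1), Q.coeff (k:ℕ) * (t ^ ((k:ℕ)+1) / ((k:ℕ)+1))
      = t * ∑ k : Fin (K+1), a k / ((k:ℕ) + 1) := by
    rw [Finset.mul_sum]
    apply Finset.sum_congr rfl
    intro k _
    rw [ha, pow_succ]
    ring
  rw [hintegral, hsum]
  calc m * Q.eval 0 * t = t * (m * a 0) := by rw [ha0]; ring
    _ ≤ t * ∑ k : Fin (K+1), a k / ((k:ℕ) + 1) := mul_le_mul_of_nonneg_left key ht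


open Polynomial intervalIntegral in
lemma aux_L3 {K : ℕ} {m : ℝ} (hm : 0 < m)
    (hK : ∀ a : Fin (K+1) → ℝ,
      (∀ s ∈ Set.Icc (0:ℝ) 1, 0 ≤ ∑ k : Fin (K+1), a k * s ^ (k:ℕ)) →
      m * a 0 ≤ ∑ k : Fin (K+1), a k / ((k:ℕ) + 1))
    (R : Polynomial ℝ) (hdeg : R.derivative.derivative.natDegree ≤ K)
    (hQnn : ∀ s : ℝ, 0 ≤ R.derivative.derivative.eval s)
    {μ' : ℝ} (hμ' : μ' ≤ R.derivative.derivative.eval 0)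
    {t : ℝ} (ht : 0 ≤ t) :
    R.eval 0 + R.derivative.eval 0 * t + (m * μ' / 2) * t^2 ≤ R.eval t := by

  set Q := R.derivative.derivative with hQdef
  have hftc : ∀ u : ℝ, (∫ s in (0:ℝ)..u, Q.eval s)
      = R.derivative.eval u - R.derivative.eval 0 := by
    intro u
    exact intervalIntegral.integral_eq_sub_of_hasDerivAt
      (fun s _ => R.derivative.hasDerivAt s)
      (Q.continuous.intervalIntegrable _ _)
  set h : ℝ → ℝ := fun u =>
    R.eval u - R.eval 0 - R.derivative.eval 0 * u - (m*μ'/2)*u^2 with hh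
  have hderiv : ∀ u : ℝ, HasDerivAt h
      (R.derivative.eval u - R.derivative.eval 0 - (m*μ')*u) u := by
    intro u
    have h1 : HasDerivAt (fun y : ℝ => R.eval y) (R.derivative.eval u) u := R.hasDerivAt u
    have h2 : HasDerivAt (fun y : ℝ => R.derivative.eval 0 * y) (R.derivative.eval 0) u := by
      simpa using (hasDerivAt_id u).const_mul (R.derivative.eval 0)
    have h3 : HasDerivAt (fun y : ℝ => (m*μ'/2)*y^2) ((m*μ'/2)*(2*u)) u := by
      have := ((hasDerivAt_pow 2 u)).const_mul (m*μ'/2)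
      simpa using this
    have := ((h1.sub_const (R.eval 0)).sub h2).sub h3
    convert this using 1
    · rfl
    · rfl
    · rfl
    · ring
  have hdnn : ∀ u : ℝ, 0 ≤ u →
      0 ≤ R.derivative.eval u - R.derivative.eval 0 - (m*μ')*u := by
    intro u hu
    have hb := aux_L2 hK Q hdeg hQnn hu
    rw [hftc u] at hb
    have : m * μ' * u ≤ m * Q.eval 0 * u := by
      apply mul_le_mul_of_nonneg_right _ hu
      exact mul_le_mul_of_nonneg_left hμ' (le_of_lt hm)
    linarith
  have hcont : Continuous h := by
    apply Continuous.sub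
    apply Continuous.sub
    apply Continuous.sub
    · exact R.continuous
    · exact continuous_const
    · exact continuous_const.mul continuous_id
    · exact continuous_const.mul (continuous_pow 2)
  have hmono : MonotoneOn h (Set.Ici (0:ℝ)) := by
    apply monotoneOn_of_deriv_nonneg (convex_Ici 0) hcont.continuousOn
    · intro u _
      exact (hderiv u).differentiableAt.differentiableWithinAt
    · intro u hu
      rw [interior_Ici] at hu
      rw [(hderiv u).deriv]
      exact hdnn u (le_of_lt hu)
  have hle : h 0 ≤ h t := hmono Set.self_mem_Ici ht ht
  have h0 : h 0 = 0 := by simp [hh]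
  rw [h0, hh] at hle
  simp only at hle
  linarith



lemma aux_contDiff {n : ℕ} (p : MvPolynomial (Fin n) ℝ) :
    ContDiff ℝ 2 (fun x : EuclideanSpace ℝ (Fin n) => MvPolynomial.eval (fun i => x i) p) := by
  induction p using MvPolynomial.induction_on with
  | C a => simpa using contDiff_const (c := a)
  | add p q hp hq =>
      simp only [MvPolynomial.eval_add]
      exact hp.add hq
  | mul_X p i hp =>
      simp only [MvPolynomial.eval_mul, MvPolynomial.eval_X]
      exact hp.mul (EuclideanSpace.proj (𝕜 := ℝ) i).contDiff

open Polynomial in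
lemma aux_deg {n : ℕ} (p : MvPolynomial (Fin n) ℝ) (g : Fin n → Polynomial ℝ)
    (hg : ∀ i, (g i).natDegree ≤ 1) :
    (MvPolynomial.eval₂ Polynomial.C g p).natDegree ≤ p.totalDegree := by
  rw [MvPolynomial.eval₂_eq]
  apply Polynomial.natDegree_sum_le_of_forall_le
  intro d hd
  calc (C (MvPolynomial.coeff d p) * ∏ i ∈ d.support, g i ^ d i).natDegree
      ≤ (C (MvPolynomial.coeff d p)).natDegree + (∏ i ∈ d.support, g i ^ d i).natDegree :=
        natDegree_mul_le
    _ ≤ 0 + ∑ i ∈ d.support, d i := by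
        rw [natDegree_C]
        apply Nat.add_le_add_left
        apply le_trans (natDegree_prod_le _ _)
        apply Finset.sum_le_sum
        intro i _
        calc (g i ^ d i).natDegree ≤ d i * (g i).natDegree := natDegree_pow_le
          _ ≤ d i * 1 := Nat.mul_le_mul_left _ (hg i)
          _ = d i := Nat.mul_one _
    _ ≤ p.totalDegree := by
        simpa [Finsupp.sum] using MvPolynomial.le_totalDegree hd

open Polynomial in
lemma aux_line {n : ℕ} (p : MvPolynomial (Fin n) ℝ) (x₀ v : EuclideanSpace ℝ (Fin n)) (t : ℝ) :
    (MvPolynomial.eval₂ Polynomial.C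
        (fun i => Polynomial.C (x₀ i) + Polynomial.C (v i) * Polynomial.X) p).eval t
      = MvPolynomial.eval (fun i => (x₀ + t • v) i) p := by
  have h := MvPolynomial.eval₂_comp_left (Polynomial.evalRingHom t) Polynomial.C
      (fun i => Polynomial.C (x₀ i) + Polynomial.C (v i) * Polynomial.X) p
  simp only [Polynomial.coe_evalRingHom, Function.comp] at h
  rw [h]
  have h2 : (Polynomial.evalRingHom t).comp Polynomial.C = RingHom.id ℝ := by
    ext a; simp
  rw [h2]
  rw [MvPolynomial.eval₂_id]
  have h3 : (Polynomial.eval t ∘ fun i => Polynomial.C (x₀ i) + Polynomial.C (v i) * Polynomial.X)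
      = fun i => (x₀ + t • v) i := by
    funext i
    simp [PiLp.add_apply, PiLp.smul_apply, smul_eq_mul]
    ring
  rw [h3]


end Aux

set_option maxHeartbeats 2000000 in
/-- A convex polynomial function whose Hessian determinant is not
identically zero admits a μ-strongly convex quadratic lower bound. -/
theorem convex_poly_strongly_convex_lower_bound {n : ℕ}
    (f : EuclideanSpace ℝ (Fin n) → ℝ)
    (hpoly : ∃ p : MvPolynomial (Fin n) ℝ, ∀ x, f x = MvPolynomial.eval (fun i => x i) p)
    (hconv : ConvexOn ℝ Set.univ f)
    (hdet : ¬ ∀ x, (hess f x).det = 0) :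
    ∃ (α : ℝ) (β : EuclideanSpace ℝ (Fin n)) (μ : ℝ), 0 < μ ∧
      ∀ x, α + ⟪β, x⟫ + (μ / 2) * ‖x‖ ^ 2 ≤ f x := by
  classical
  obtain ⟨p, hp⟩ := hpoly
  push_neg at hdet
  obtain ⟨x₀, hx₀⟩ := hdet
  rcases Nat.eq_zero_or_pos n with hn | hn
  · subst hn
    refine ⟨f 0, 0, 1, one_pos, ?_⟩
    intro x
    have hx : x = 0 := by ext i; exact Fin.elim0 i
    subst hx
    simp
  have hfeq : f = fun x => MvPolynomial.eval (fun i => x i) p := funext hp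
  have hf2 : ContDiff ℝ 2 f := by rw [hfeq]; exact aux_contDiff p
  have hdiff : Differentiable ℝ f := hf2.differentiable (by norm_num)
  obtain ⟨f', hf'def⟩ : ∃ g, g = fderiv ℝ f := ⟨_, rfl⟩
  have hf1 : ContDiff ℝ 1 f' := by rw [hf'def]; exact hf2.fderiv_right (by norm_num)
  have hf'diff : Differentiable ℝ f' := hf1.differentiable (by norm_num)
  have hfd : ∀ y, HasFDerivAt f (f' y) y := by
    intro y; rw [hf'def]; exact (hdiff y).hasFDerivAt
  obtain ⟨B, hBdef⟩ : ∃ b, b = fderiv ℝ f' x₀ := ⟨_, rfl⟩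
  have hB : HasFDerivAt f' B x₀ := by
    rw [hBdef]; exact (hf'diff x₀).hasFDerivAt
  have hBsymm : ∀ v w, B v w = B w v :=
    second_derivative_symmetric hfd hB
  have hhess : ∀ i j, hess f x₀ i j
      = B (EuclideanSpace.single i 1) (EuclideanSpace.single j 1) := by
    intro i j
    have h1 : HasFDerivAt ((ContinuousLinearMap.apply ℝ ℝ (EuclideanSpace.single j 1)) ∘ f')
        ((ContinuousLinearMap.apply ℝ ℝ (EuclideanSpace.single j 1)).comp B) x₀ :=
      (ContinuousLinearMap.apply ℝ ℝ (EuclideanSpace.single j 1)).hasFDerivAt.comp x₀ hB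
    have h1' : HasFDerivAt (fun y => f' y (EuclideanSpace.single j 1))
        ((ContinuousLinearMap.apply ℝ ℝ (EuclideanSpace.single j 1)).comp B) x₀ := h1
    show fderiv ℝ (fun y => fderiv ℝ f y (EuclideanSpace.single j 1)) x₀
        (EuclideanSpace.single i 1) = _
    rw [← hf'def, h1'.fderiv]
    simp
  -- derivative facts along lines
  have hgderiv : ∀ (v : EuclideanSpace ℝ (Fin n)) (t : ℝ),
      HasDerivAt (fun u : ℝ => f (x₀ + u • v)) (f' (x₀ + t • v) v) t := by
    intro v t
    have hc : HasDerivAt (fun u : ℝ => x₀ + u • v) v t := by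
      simpa using ((hasDerivAt_id t).smul_const v).const_add x₀
    exact (hfd _).comp_hasDerivAt t hc
  have hgconv : ∀ v : EuclideanSpace ℝ (Fin n),
      ConvexOn ℝ Set.univ (fun t : ℝ => f (x₀ + t • v)) := by
    intro v
    have h := hconv.comp_affineMap (AffineMap.lineMap x₀ (x₀ + v) : ℝ →ᵃ[ℝ] _)
    simp only [Set.preimage_univ] at h
    convert h using 1
    · rfl
    · rfl
    · rfl
    · rfl
    funext t
    simp only [Function.comp_apply, AffineMap.lineMap_apply, vsub_eq_sub, vadd_eq_add,
      add_sub_cancel_left]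
    rw [add_comm]
  have hg'mono : ∀ v : EuclideanSpace ℝ (Fin n),
      Monotone (fun t : ℝ => f' (x₀ + t • v) v) := by
    intro v
    have h := (hgconv v).monotoneOn_deriv (fun t _ => (hgderiv v t).differentiableAt)
    have hde : deriv (fun u : ℝ => f (x₀ + u • v)) = fun t => f' (x₀ + t • v) v :=
      funext fun t => (hgderiv v t).deriv
    rw [hde] at h
    exact monotoneOn_univ.mp h
  have hsecond : ∀ v : EuclideanSpace ℝ (Fin n),
      HasDerivAt (fun t : ℝ => f' (x₀ + t • v) v) (B v v) 0 := by
    intro v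
    have hF : HasFDerivAt (fun y => f' y v)
        ((ContinuousLinearMap.apply ℝ ℝ v).comp B) x₀ :=
      (ContinuousLinearMap.apply ℝ ℝ v).hasFDerivAt.comp x₀ hB
    have h0 : x₀ + (0:ℝ) • v = x₀ := by simp
    rw [← h0] at hF
    have hc : HasDerivAt (fun u : ℝ => x₀ + u • v) v 0 := by
      simpa using ((hasDerivAt_id (0:ℝ)).smul_const v).const_add x₀
    have := hF.comp_hasDerivAt 0 hc
    simp only [ContinuousLinearMap.comp_apply, ContinuousLinearMap.apply_apply] at this
    exact this
  have hpsd : ∀ v : EuclideanSpace ℝ (Fin n), 0 ≤ B v v :=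
    fun v => aux_mono_deriv_nonneg (hg'mono v) (hsecond v)
  have hdecomp : ∀ v : EuclideanSpace ℝ (Fin n),
      v = ∑ i, v i • EuclideanSpace.single i 1 := by
    intro v
    ext j
    rw [WithLp.ofLp_sum, Finset.sum_apply]
    simp [EuclideanSpace.single_apply]
  -- minimum of the quadratic form on the unit sphere
  have hsphne : (Metric.sphere (0 : EuclideanSpace ℝ (Fin n)) 1).Nonempty := by
    refine ⟨EuclideanSpace.single ⟨0, hn⟩ 1, ?_⟩
    simp [EuclideanSpace.norm_single]
  have hcontB : Continuous fun v : EuclideanSpace ℝ (Fin n) => B v v :=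
    B.continuous.clm_apply continuous_id
  obtain ⟨v₀, hv₀, hminv⟩ := (isCompact_sphere (0 : EuclideanSpace ℝ (Fin n)) 1).exists_isMinOn
    hsphne hcontB.continuousOn
  have hv₀norm : ‖v₀‖ = 1 := mem_sphere_zero_iff_norm.mp hv₀
  obtain ⟨μ', hμ'def⟩ : ∃ u, u = B v₀ v₀ := ⟨_, rfl⟩
  have hμ'pos : 0 < μ' := by
    rw [hμ'def]
    rcases (hpsd v₀).lt_or_eq with h | h
    · exact h
    · exfalso
      have heq0 : B v₀ v₀ = 0 := h.symm
      have hzero : ∀ w, B v₀ w = 0 := by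
        intro w
        have hq : ∀ s : ℝ, 0 ≤ 2*s*(B v₀ w) + s^2*(B w w) := by
          intro s
          have h0 := hpsd (v₀ + s • w)
          have hexp : B (v₀ + s • w) (v₀ + s • w)
              = B v₀ v₀ + s*(B v₀ w) + s*(B w v₀) + s^2*(B w w) := by
            simp only [map_add, map_smul, ContinuousLinearMap.add_apply,
              ContinuousLinearMap.smul_apply, smul_eq_mul]
            ring
          rw [hexp, heq0, hBsymm w v₀] at h0
          linarith
        set cc := B v₀ w with hccdef
        set dd := B w w with hdddef
        have h2 : 0 ≤ dd := hpsd w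
        have h3 : (0:ℝ) < dd + 1 := by linarith
        set s₀ := -cc/(dd+1) with hs₀
        have h1 := hq s₀
        have h5 : (2*s₀*cc + s₀^2*dd) * ((dd+1)^2) = -(cc^2)*(dd+2) := by
          rw [hs₀]; field_simp; ring
        have h4 : 0 ≤ (2*s₀*cc + s₀^2*dd) * ((dd+1)^2) :=
          mul_nonneg h1 (by positivity)
        rw [h5] at h4
        have h6 : cc^2 ≤ 0 := by nlinarith
        have h7 : cc^2 = 0 := le_antisymm h6 (sq_nonneg cc)
        exact pow_eq_zero_iff (by norm_num) |>.mp h7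
      apply hx₀
      apply Matrix.exists_vecMul_eq_zero_iff.mp
      refine ⟨(fun i => v₀ i), ?_, ?_⟩
      · intro hcontra
        have : v₀ = 0 := by
          ext j
          exact congrFun hcontra j
        rw [this] at hv₀norm
        simp at hv₀norm
      · funext j
        show ∑ i, (fun i => v₀ i) i * hess f x₀ i j = 0
        have : ∑ i, v₀ i * hess f x₀ i j = B v₀ (EuclideanSpace.single j 1) := by
          conv_rhs => rw [hdecomp v₀]
          rw [map_sum, ContinuousLinearMap.sum_apply]
          apply Finset.sum_congr rfl
          intro i _
          rw [map_smul, ContinuousLinearMap.smul_apply, smul_eq_mul, hhess i j]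
        rw [this, hzero]
  -- the key growth bound
  obtain ⟨m, hm, hK⟩ := aux_L1 p.totalDegree
  have hbound : ∀ x : EuclideanSpace ℝ (Fin n),
      f x₀ + f' x₀ (x - x₀) + (m*μ'/2) * ‖x - x₀‖^2 ≤ f x := by
    intro x
    by_cases hx : x = x₀
    · subst hx
      simp
    · have ht : (0:ℝ) < ‖x - x₀‖ := by
        rw [norm_pos_iff]
        exact sub_ne_zero.mpr hx
      set t := ‖x - x₀‖ with htdef
      set v := t⁻¹ • (x - x₀) with hvdef
      have hvnorm : ‖v‖ = 1 := by
        rw [hvdef, norm_smul, norm_inv, norm_norm, ← htdef, inv_mul_cancel₀ (ne_of_gt ht)]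
      have hxv : x₀ + t • v = x := by
        rw [hvdef, smul_smul, mul_inv_cancel₀ (ne_of_gt ht), one_smul]
        abel
      set R := MvPolynomial.eval₂ Polynomial.C
        (fun i => Polynomial.C (x₀ i) + Polynomial.C (v i) * Polynomial.X) p with hRdef
      have hReval : ∀ u : ℝ, R.eval u = f (x₀ + u • v) := by
        intro u
        rw [hRdef, aux_line, hfeq]
      have hRdeg : R.natDegree ≤ p.totalDegree := by
        apply aux_deg
        intro i
        apply le_trans (Polynomial.natDegree_add_le _ _)
        simp [Polynomial.natDegree_C_mul_le]
        exact Polynomial.natDegree_C_mul_le _ _ |>.trans (by simp)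
      have hgR : (fun u : ℝ => f (x₀ + u • v)) = fun u => R.eval u :=
        funext fun u => (hReval u).symm
      have hder1 : ∀ u : ℝ, f' (x₀ + u • v) v = R.derivative.eval u := by
        intro u
        have h1 := hgderiv v u
        rw [hgR] at h1
        exact h1.unique (R.hasDerivAt u)
      have hder1' : (fun u : ℝ => f' (x₀ + u • v) v) = fun u => R.derivative.eval u :=
        funext hder1
      set Q := R.derivative.derivative with hQdef
      have hQnn : ∀ s : ℝ, 0 ≤ Q.eval s := by
        intro s
        apply aux_mono_deriv_nonneg (hg'mono v)
        rw [hder1']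
        exact R.derivative.hasDerivAt s
      have hQ0 : B v v = Q.eval 0 := by
        apply (hsecond v).unique
        rw [hder1']
        exact R.derivative.hasDerivAt 0
      have hvmem : v ∈ Metric.sphere (0 : EuclideanSpace ℝ (Fin n)) 1 :=
        mem_sphere_zero_iff_norm.mpr hvnorm
      have hμ'le : μ' ≤ Q.eval 0 := by
        rw [hμ'def, ← hQ0]
        exact hminv hvmem
      have hQdeg : Q.natDegree ≤ p.totalDegree := by
        have h1 : Q.natDegree ≤ R.derivative.natDegree :=
          le_trans (Polynomial.natDegree_derivative_le _) (Nat.sub_le _ _)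
        have h2 : R.derivative.natDegree ≤ R.natDegree :=
          le_trans (Polynomial.natDegree_derivative_le _) (Nat.sub_le _ _)
        exact le_trans h1 (le_trans h2 hRdeg)
      have hgrow := aux_L3 hm hK R hQdeg hQnn hμ'le (le_of_lt ht)
      have he1 : R.eval t = f x := by rw [hReval t, hxv]
      have he2 : R.eval 0 = f x₀ := by rw [hReval 0]; simp
      have he3 : R.derivative.eval 0 = f' x₀ v := by
        rw [← hder1 0]
        simp
      have hsm : x - x₀ = t • v := by rw [← hxv]; abel
      have he4 : f' x₀ (x - x₀) = t * f' x₀ v := by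
        conv_lhs => rw [hsm]
        rw [map_smul, smul_eq_mul]
      rw [he1, he2, he3] at hgrow
      linarith [hgrow, he4]
  -- final packaging
  set c := m * μ' / 2 with hcdef
  have hc : 0 < c := by positivity
  set L := f' x₀ with hLdef
  set βL := (InnerProductSpace.toDual ℝ (EuclideanSpace ℝ (Fin n))).symm L with hβLdef
  refine ⟨f x₀ - L x₀ + c * ‖x₀‖^2, βL - (2*c) • x₀, 2*c, by positivity, ?_⟩
  intro x
  have hb := hbound x
  have hnormsq : ‖x - x₀‖^2 = ‖x‖^2 - 2*⟪x,x₀⟫ + ‖x₀‖^2 := norm_sub_sq_real x x₀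
  have hinner : ⟪βL - (2*c) • x₀, x⟫ = L x - 2*c*⟪x₀,x⟫ := by
    rw [inner_sub_left, real_inner_smul_left, hβLdef, InnerProductSpace.toDual_symm_apply]
  have hLsub : L (x - x₀) = L x - L x₀ := map_sub L x x₀
  have hcomm : ⟪x,x₀⟫ = ⟪x₀,x⟫ := real_inner_comm x₀ x
  have h2c : (2*c)/2 = c := by ring
  rw [hinner, h2c]
  rw [hLsub, hnormsq, hcomm] at hb
  linarith
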